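/- Let G be a simple 3-regular graph with girth at least 5, let xy be an edge of G with κ_{1/4}(x,y) = 0 (equivalently W_1(μ_x^{1/4}, μ_y^{1/4}) = 1), let x_1, x_2 be the two neighbors of x other than y, and let y_1, y_2 be the two neighbors of y other than x. Then, after possibly exchanging the labels of y_1 and y_2, the graph distances satisfy d(x_1, y_1) = 2 and d(x_2, y_2) = 2; consequently there exist vertices u and v, both outside {x, y, x_1, x_2, y_1, y_2}, with x_1 ~ u ~ y_1 and x_2 ~ v ~ y_2. -/

import Mathlib

open scoped ENNReal

namespace RicciFlatCubic

variable {V : Type*}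

/-- The probability measure `μ_x^p` on the vertex set: mass `p` at `x`,
mass `(1-p)/deg x` at each neighbor of `x`, and `0` elsewhere. -/
noncomputable def muMeasure (G : SimpleGraph V) [G.LocallyFinite] (p : ℝ≥0∞) (x : V) :
    V → ℝ≥0∞ := fun z =>
  haveI : DecidableEq V := Classical.decEq V
  haveI : Decidable (G.Adj x z) := Classical.dec _
  if z = x then p
  else if G.Adj x z then (1 - p) / (G.degree x : ℝ≥0∞)
  else 0

/-- `π : V × V → [0,1]` is a transport plan from `μ₁` to `μ₂` if its marginals are `μ₁`, `μ₂`. -/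
def IsTransportPlan (μ₁ μ₂ : V → ℝ≥0∞) (π : V → V → ℝ≥0∞) : Prop :=
  (∀ u v, π u v ≤ 1) ∧ (∀ u, ∑' v, π u v = μ₁ u) ∧ (∀ v, ∑' u, π u v = μ₂ v)

/-- The Wasserstein distance `W₁(μ₁, μ₂)`: the infimum over all transport plans of the
transport cost `∑ d(u,v) π(u,v)`, where `d` is the shortest-path distance in `G`. -/
noncomputable def W1 (G : SimpleGraph V) (μ₁ μ₂ : V → ℝ≥0∞) : ℝ≥0∞ :=
  ⨅ π : {π : V → V → ℝ≥0∞ // IsTransportPlan μ₁ μ₂ π},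
    ∑' q : V × V, (G.dist q.1 q.2 : ℝ≥0∞) * π.1 q.1 q.2

/-- The `p`-Ollivier-Ricci curvature `κ_p(x,y) = 1 - W₁(μ_x^p, μ_y^p)` (as a real number),
for a real idleness parameter `p`. -/
noncomputable def kappa (G : SimpleGraph V) [G.LocallyFinite] (p : ℝ) (x y : V) : ℝ :=
  1 - (W1 G (muMeasure G (ENNReal.ofReal p) x) (muMeasure G (ENNReal.ofReal p) y)).toReal

/-- The edge `xy` lies on two 5-cycles whose vertex sets intersect exactly in `{x, y}`. -/
def TwoPentagons (G : SimpleGraph V) (x y : V) : Prop :=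
  ∃ P₁ P₂ : G.Walk x x, P₁.IsCycle ∧ P₂.IsCycle ∧ P₁.length = 5 ∧ P₂.length = 5 ∧
    s(x, y) ∈ P₁.edges ∧ s(x, y) ∈ P₂.edges ∧
    {v | v ∈ P₁.support} ∩ {v | v ∈ P₂.support} = {x, y}

/-- The Petersen graph as the Kneser graph `K(5,2)`. -/
def petersen : SimpleGraph {s : Finset (Fin 5) // s.card = 2} where
  Adj a b := Disjoint a.1 b.1
  symm := ⟨fun _ _ h => Disjoint.symm h⟩
  loopless := ⟨by
    rintro ⟨s, hs⟩ h
    beta_reduce at h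
    rw [disjoint_self] at h
    simp only [Finset.bot_eq_empty] at h
    simp [h] at hs⟩

/-- The Triplex: a 12-cycle on `ℤ/12ℤ` together with six chords. -/
def triplex : SimpleGraph (ZMod 12) :=
  SimpleGraph.fromRel fun i j =>
    j = i + 1 ∨ (i = 1 ∧ j = 7) ∨ (i = 2 ∧ j = 10) ∨ (i = 3 ∧ j = 8) ∨
      (i = 4 ∧ j = 12) ∨ (i = 5 ∧ j = 9) ∨ (i = 6 ∧ j = 11)

/-- The dodecahedral graph: layer `0` is the outer 5-cycle `a`, layers `1`, `2` form the
middle 10-cycle `b₁ c₁ b₂ c₂ … b₅ c₅`, layer `3` is the inner 5-cycle `d`. -/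
def dodecahedral : SimpleGraph (Fin 4 × ZMod 5) :=
  SimpleGraph.fromRel fun p q =>
    (p.1 = 0 ∧ q.1 = 0 ∧ q.2 = p.2 + 1) ∨
    (p.1 = 0 ∧ q.1 = 1 ∧ q.2 = p.2) ∨
    (p.1 = 1 ∧ q.1 = 2 ∧ q.2 = p.2) ∨
    (p.1 = 2 ∧ q.1 = 1 ∧ q.2 = p.2 + 1) ∨
    (p.1 = 2 ∧ q.1 = 3 ∧ q.2 = p.2) ∨
    (p.1 = 3 ∧ q.1 = 3 ∧ q.2 = p.2 + 1)

/-- The half-dodecahedral graph: inner 5-cycle `y` (`Sum.inl`), outer 10-cycle `x`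
(`Sum.inr`), and spokes `yᵢ ~ x_{2i-1}`. -/
def halfDodecahedral : SimpleGraph (ZMod 5 ⊕ ZMod 10) :=
  SimpleGraph.fromRel fun p q =>
    (∃ i : ZMod 5, p = Sum.inl i ∧ q = Sum.inl (i + 1)) ∨
    (∃ j : ZMod 10, p = Sum.inr j ∧ q = Sum.inr (j + 1)) ∨
    (∃ i : ZMod 5, p = Sum.inl i ∧ q = Sum.inr (2 * (i.val : ZMod 10) - 1))

/-- The two-sided infinite path on `ℤ`. -/
def infinitePath : SimpleGraph ℤ := SimpleGraph.fromRel fun i j => j = i + 1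

/-- The cycle `Cₙ` on `ℤ/nℤ`. -/
def cycleZMod (n : ℕ) : SimpleGraph (ZMod n) := SimpleGraph.fromRel fun i j => j = i + 1

noncomputable instance (v : {s : Finset (Fin 5) // s.card = 2}) :
    Fintype (petersen.neighborSet v) := (Set.toFinite _).fintype

noncomputable instance (v : ZMod 12) : Fintype (triplex.neighborSet v) :=
  (Set.toFinite _).fintype

noncomputable instance (v : Fin 4 × ZMod 5) : Fintype (dodecahedral.neighborSet v) :=
  (Set.toFinite _).fintype


section Helpers

variable {G : SimpleGraph V}

lemma no_tri (hg : 5 ≤ G.egirth) {a b c : V} (hab : G.Adj a b) (hbc : G.Adj b c)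
    (hca : G.Adj c a) : False := by
  have hc : (SimpleGraph.Walk.cons hab (SimpleGraph.Walk.cons hbc
      (SimpleGraph.Walk.cons hca SimpleGraph.Walk.nil))).IsCycle := by
    simp [SimpleGraph.Walk.isCycle_def, SimpleGraph.Walk.isTrail_def, hab.ne, hbc.ne, hca.ne,
      hab.ne', hbc.ne', hca.ne', Sym2.eq, Sym2.rel_iff]
  have := SimpleGraph.le_egirth.mp hg a _ hc
  simp at this
  exact absurd this (by decide)

lemma no_sq (hg : 5 ≤ G.egirth) {a b c d : V} (hab : G.Adj a b) (hbc : G.Adj b c)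
    (hcd : G.Adj c d) (hda : G.Adj d a) (hac : a ≠ c) (hbd : b ≠ d) : False := by
  have hc : (SimpleGraph.Walk.cons hab (SimpleGraph.Walk.cons hbc (SimpleGraph.Walk.cons hcd
      (SimpleGraph.Walk.cons hda SimpleGraph.Walk.nil)))).IsCycle := by
    simp [SimpleGraph.Walk.isCycle_def, SimpleGraph.Walk.isTrail_def, hab.ne, hbc.ne, hcd.ne,
      hda.ne, hab.ne', hbc.ne', hcd.ne', hda.ne', hac, hbd, hac.symm, hbd.symm, Sym2.eq,
      Sym2.rel_iff]
  have := SimpleGraph.le_egirth.mp hg a _ hc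
  simp at this
  exact absurd this (by decide)

lemma dist_tri {u v w : V} (h : G.Reachable u v) :
    G.dist u w ≤ G.dist u v + G.dist v w := by
  by_cases hvw : G.Reachable v w
  · obtain ⟨p, hp⟩ := h.exists_walk_length_eq_dist
    obtain ⟨q, hq⟩ := hvw.exists_walk_length_eq_dist
    calc G.dist u w ≤ (p.append q).length := SimpleGraph.dist_le _
      _ = G.dist u v + G.dist v w := by rw [SimpleGraph.Walk.length_append, hp, hq]
  · have huw : ¬ G.Reachable u w := fun huw => hvw (h.symm.trans huw)
    rw [SimpleGraph.dist_eq_zero_of_not_reachable huw]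
    exact Nat.zero_le _

lemma mid {a b : V} (h : G.dist a b = 2) : ∃ u, G.Adj a u ∧ G.Adj u b := by
  have hr : G.Reachable a b := SimpleGraph.Reachable.of_dist_ne_zero (by omega)
  obtain ⟨p, hp⟩ := hr.exists_walk_length_eq_dist
  rw [h] at hp
  match p, hp with
  | .cons h' (.cons h'' .nil), _ => exact ⟨_, h', h''⟩

lemma mids_ne (hg : 5 ≤ G.egirth) {x y a b c d u : V} (hxy : G.Adj x y) (hxa : G.Adj x a)
    (hxb : G.Adj x b) (hyc : G.Adj y c) (hyd : G.Adj y d) (hau : G.Adj a u) (huc : G.Adj u c) :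
    u ≠ x ∧ u ≠ y ∧ u ≠ a ∧ u ≠ b ∧ u ≠ c ∧ u ≠ d := by
  refine ⟨?_, ?_, ?_, ?_, ?_, ?_⟩ <;> intro h
  · exact no_tri hg hxy hyc (by subst h; exact huc.symm)
  · exact no_tri hg hxa (by subst h; exact hau) hxy.symm
  · exact G.loopless.irrefl a (h ▸ hau)
  · exact no_tri hg hxa (h ▸ hau) hxb.symm
  · exact G.loopless.irrefl c (h ▸ huc)
  · exact no_tri hg hyc (h ▸ huc).symm hyd.symm

variable [G.LocallyFinite]

lemma nbr_iff (hreg : G.IsRegularOfDegree 3) {x y x₁ x₂ : V} (hxy : G.Adj x y)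
    (hx₁ : G.Adj x x₁) (hx₂ : G.Adj x x₂) (hx12 : x₁ ≠ x₂) (h1y : x₁ ≠ y) (h2y : x₂ ≠ y) :
    ∀ z, G.Adj x z ↔ (z = y ∨ z = x₁ ∨ z = x₂) := by
  classical
  have hsub : ({y, x₁, x₂} : Finset V) ⊆ G.neighborFinset x := by
    intro w hw
    simp only [Finset.mem_insert, Finset.mem_singleton] at hw
    rcases hw with rfl | rfl | rfl <;> simp [hxy, hx₁, hx₂]
  have hcard : ({y, x₁, x₂} : Finset V).card = 3 := by
    rw [Finset.card_insert_of_notMem (by simp [h1y.symm, h2y.symm]),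
      Finset.card_insert_of_notMem (by simp [hx12]), Finset.card_singleton]
  have heq : G.neighborFinset x = ({y, x₁, x₂} : Finset V) :=
    (Finset.eq_of_subset_of_card_le hsub
      (by rw [hcard, SimpleGraph.card_neighborFinset_eq_degree, hreg x])).symm
  intro z
  rw [← SimpleGraph.mem_neighborFinset, heq]
  simp

lemma mu_self (x : V) : muMeasure G (1/4) x x = 1/4 := by simp [muMeasure]

lemma mu_adj (hreg : G.IsRegularOfDegree 3) {x z : V} (hz : G.Adj x z) :
    muMeasure G (1/4) x z = 1/4 := by
  simp only [muMeasure, if_neg hz.ne', if_pos hz, hreg x]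
  rw [show ((3:ℕ):ℝ≥0∞) = 3 by norm_cast]
  have h34 : (1 - 1/4 : ℝ≥0∞) = 3/4 := by
    apply ENNReal.sub_eq_of_eq_add (by norm_num)
    rw [ENNReal.div_add_div_same, show (3+1 : ℝ≥0∞) = 4 by norm_num]
    exact (ENNReal.div_self (by norm_num) (by norm_num)).symm
  rw [h34, div_eq_mul_inv, div_eq_mul_inv, one_div, mul_right_comm,
    ENNReal.mul_inv_cancel (by norm_num) (by norm_num), one_mul]

lemma mu_zero {x z : V} (hzx : z ≠ x) (hz : ¬ G.Adj x z) :
    muMeasure G (1/4) x z = 0 := by simp [muMeasure, hzx, hz]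

lemma mu_tsum (hreg : G.IsRegularOfDegree 3) {x y x₁ x₂ : V} (hxy : G.Adj x y)
    (hx₁ : G.Adj x x₁) (hx₂ : G.Adj x x₂) (hx12 : x₁ ≠ x₂) (h1y : x₁ ≠ y) (h2y : x₂ ≠ y)
    (g : V → ℕ) :
    ∑' u, (g u : ℝ≥0∞) * muMeasure G (1/4) x u
      = (g x) * (1/4) + ((g y) * (1/4) + ((g x₁) * (1/4) + (g x₂) * (1/4))) := by
  classical
  have hnbr := nbr_iff hreg hxy hx₁ hx₂ hx12 h1y h2y
  rw [tsum_eq_sum (s := ({x, y, x₁, x₂} : Finset V)) (by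
    intro u hu
    simp only [Finset.mem_insert, Finset.mem_singleton, not_or] at hu
    obtain ⟨h1, h2, h3, h4⟩ := hu
    rw [mu_zero h1 (fun hadj => by rcases (hnbr u).mp hadj with rfl|rfl|rfl <;> simp_all),
      mul_zero])]
  rw [Finset.sum_insert (by simp [hxy.ne, hx₁.ne, hx₂.ne]),
    Finset.sum_insert (by simp [h1y.symm, h2y.symm]),
    Finset.sum_insert (by simp [hx12]), Finset.sum_singleton,
    mu_self, mu_adj hreg hxy, mu_adj hreg hx₁, mu_adj hreg hx₂]

lemma plan_bound (π : V → V → ℝ≥0∞) (μ₁ μ₂ : V → ℝ≥0∞)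
    (h₁ : ∀ u, ∑' v, π u v = μ₁ u) (h₂ : ∀ v, ∑' u, π u v = μ₂ v) (f : V → ℕ)
    (hLip : ∀ u v, π u v ≠ 0 → (f u : ℝ≥0∞) ≤ G.dist u v + f v) :
    ∑' u, (f u : ℝ≥0∞) * μ₁ u
      ≤ (∑' q : V × V, (G.dist q.1 q.2 : ℝ≥0∞) * π q.1 q.2) + ∑' v, (f v : ℝ≥0∞) * μ₂ v := by
  calc ∑' u, (f u : ℝ≥0∞) * μ₁ u
      = ∑' u, ∑' v, (f u : ℝ≥0∞) * π u v := by
        simp_rw [ENNReal.tsum_mul_left, h₁]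
    _ ≤ ∑' u, ∑' v, ((G.dist u v : ℝ≥0∞) * π u v + (f v : ℝ≥0∞) * π u v) := by
        refine ENNReal.tsum_le_tsum fun u => ENNReal.tsum_le_tsum fun v => ?_
        by_cases h : π u v = 0
        · simp [h]
        · rw [← add_mul]
          exact mul_le_mul_left (hLip u v h) _
    _ = (∑' u, ∑' v, (G.dist u v : ℝ≥0∞) * π u v)
        + ∑' u, ∑' v, (f v : ℝ≥0∞) * π u v := by
        simp [ENNReal.tsum_add]
    _ = (∑' q : V × V, (G.dist q.1 q.2 : ℝ≥0∞) * π q.1 q.2)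
        + ∑' v, (f v : ℝ≥0∞) * μ₂ v := by
        rw [← ENNReal.tsum_prod]
        congr 1
        rw [ENNReal.tsum_comm]
        simp_rw [ENNReal.tsum_mul_left, h₂]

lemma flip_cost (π : V → V → ℝ≥0∞) :
    (∑' q : V × V, (G.dist q.1 q.2 : ℝ≥0∞) * π q.2 q.1)
      = ∑' q : V × V, (G.dist q.1 q.2 : ℝ≥0∞) * π q.1 q.2 := by
  rw [← (Equiv.prodComm V V).tsum_eq (fun q : V × V => (G.dist q.1 q.2 : ℝ≥0∞) * π q.1 q.2)]
  apply tsum_congr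
  intro q
  simp [SimpleGraph.dist_comm]

open SimpleGraph in
lemma core (hreg : G.IsRegularOfDegree 3) {x y x₁ x₂ y₁ y₂ : V} (hxy : G.Adj x y)
    (hx₁ : G.Adj x x₁) (hx₂ : G.Adj x x₂) (hx12 : x₁ ≠ x₂) (hx1y : x₁ ≠ y) (hx2y : x₂ ≠ y)
    (hy₁ : G.Adj y y₁) (hy₂ : G.Adj y y₂) (hy12 : y₁ ≠ y₂) (hy1x : y₁ ≠ x) (hy2x : y₂ ≠ x)
    (h3 : G.dist x₁ y₁ = 3) (h3' : G.dist x₁ y₂ = 3)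
    (hc : 2 ≤ G.dist x₂ y₁) (he : 2 ≤ G.dist x₂ y₂)
    (π : V → V → ℝ≥0∞)
    (hπ : IsTransportPlan (muMeasure G (1/4) x) (muMeasure G (1/4) y) π) :
    (5:ℝ≥0∞)/4 ≤ ∑' q : V × V, (G.dist q.1 q.2 : ℝ≥0∞) * π q.1 q.2 := by
  classical
  obtain ⟨-, hm1, hm2⟩ := hπ
  set f : V → ℕ := fun w => min (G.dist w y₁) (G.dist w y₂) with hf
  have hrx : ∀ w, (w = x ∨ w = y ∨ w = x₁ ∨ w = x₂ ∨ w = y₁ ∨ w = y₂) → G.Reachable x w := by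
    rintro w (rfl | rfl | rfl | rfl | rfl | rfl)
    · exact Reachable.refl _
    · exact hxy.reachable
    · exact hx₁.reachable
    · exact hx₂.reachable
    · exact hxy.reachable.trans hy₁.reachable
    · exact hxy.reachable.trans hy₂.reachable
  have hnbrx := nbr_iff hreg hxy hx₁ hx₂ hx12 hx1y hx2y
  have hnbry := nbr_iff hreg hxy.symm hy₁ hy₂ hy12 hy1x hy2x
  have hLip : ∀ u v, π u v ≠ 0 → (f u : ℝ≥0∞) ≤ G.dist u v + f v := by
    intro u v hne
    have hu : u = x ∨ u = y ∨ u = x₁ ∨ u = x₂ := by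
      by_contra hcon
      push_neg at hcon
      obtain ⟨h1, h2, h3, h4⟩ := hcon
      have : muMeasure G (1/4) x u = 0 :=
        mu_zero h1 (fun hadj => by rcases (hnbrx u).mp hadj with rfl|rfl|rfl <;> simp_all)
      exact hne (le_antisymm (by rw [← hm1 u] at this; exact this ▸ ENNReal.le_tsum v)
        (zero_le))
    have hv : v = y ∨ v = x ∨ v = y₁ ∨ v = y₂ := by
      by_contra hcon
      push_neg at hcon
      obtain ⟨h1, h2, h3, h4⟩ := hcon
      have : muMeasure G (1/4) y v = 0 :=
        mu_zero h1 (fun hadj => by rcases (hnbry v).mp hadj with rfl|rfl|rfl <;> simp_all)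
      exact hne (le_antisymm (by rw [← hm2 v] at this; exact this ▸ ENNReal.le_tsum u)
        (zero_le))
    have hruv : G.Reachable u v := by
      refine ((hrx u ?_).symm.trans (hrx v ?_)) <;> tauto
    have t1 : G.dist u y₁ ≤ G.dist u v + G.dist v y₁ := dist_tri hruv
    have t2 : G.dist u y₂ ≤ G.dist u v + G.dist v y₂ := dist_tri hruv
    have hn : f u ≤ G.dist u v + f v := by
      simp only [hf]
      omega
    exact_mod_cast hn
  have key := plan_bound π _ _ hm1 hm2 f hLip
  rw [mu_tsum hreg hxy hx₁ hx₂ hx12 hx1y hx2y f,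
    mu_tsum hreg hxy.symm hy₁ hy₂ hy12 hy1x hy2x f] at key
  have hfy1 : f y₁ = 0 := by simp [hf]
  have hfy2 : f y₂ = 0 := by simp [hf]
  have hfx1 : f x₁ = 3 := by simp [hf, h3, h3']
  have hfx2 : (2:ℝ≥0∞) ≤ (f x₂ : ℝ≥0∞) := by
    have : 2 ≤ f x₂ := le_min hc he
    exact_mod_cast this
  rw [hfy1, hfy2, hfx1] at key
  push_cast at key
  set q : ℝ≥0∞ := 1/4 with hq
  set B : ℝ≥0∞ := (f y : ℝ≥0∞) * q + ((f x : ℝ≥0∞) * q + ((0:ℝ≥0∞) * q + 0 * q)) with hB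
  have hBne : B ≠ ⊤ := by
    simp only [hB, hq]
    refine ENNReal.add_ne_top.mpr ⟨?_, ENNReal.add_ne_top.mpr ⟨?_, by simp⟩⟩ <;>
      exact ENNReal.mul_ne_top (ENNReal.natCast_ne_top _) (by norm_num)
  have step : (5:ℝ≥0∞)/4 + B ≤ (∑' q : V × V, (G.dist q.1 q.2 : ℝ≥0∞) * π q.1 q.2) + B := by
    refine le_trans ?_ key
    have h5 : (5:ℝ≥0∞)/4 ≤ 3 * q + (f x₂ : ℝ≥0∞) * q := by
      calc (5:ℝ≥0∞)/4 = 3 * q + 2 * q := by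
            rw [← add_mul, show (3+2:ℝ≥0∞) = 5 by norm_num, hq, mul_one_div]
        _ ≤ 3 * q + (f x₂ : ℝ≥0∞) * q := by gcongr
    calc (5:ℝ≥0∞)/4 + B ≤ (3 * q + (f x₂ : ℝ≥0∞) * q) + B := by gcongr
      _ = (f x : ℝ≥0∞) * q + ((f y : ℝ≥0∞) * q + (3 * q + (f x₂ : ℝ≥0∞) * q)) := by
          rw [hB]; ring
  exact (ENNReal.add_le_add_iff_right hBne).mp step

end Helpers

theorem dist_neighbors_eq_two {V : Type*} (G : SimpleGraph V) [G.LocallyFinite]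
    (hreg : G.IsRegularOfDegree 3) (hgirth : 5 ≤ G.egirth)
    (x y x₁ x₂ y₁ y₂ : V) (hxy : G.Adj x y)
    (hflat : W1 G (muMeasure G (1/4) x) (muMeasure G (1/4) y) = 1)
    (hx₁ : G.Adj x x₁) (hx₂ : G.Adj x x₂) (hx12 : x₁ ≠ x₂) (hx1y : x₁ ≠ y) (hx2y : x₂ ≠ y)
    (hy₁ : G.Adj y y₁) (hy₂ : G.Adj y y₂) (hy12 : y₁ ≠ y₂) (hy1x : y₁ ≠ x) (hy2x : y₂ ≠ x) :
    (G.dist x₁ y₁ = 2 ∧ G.dist x₂ y₂ = 2 ∧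
      ∃ u v : V, u ∉ ({x, y, x₁, x₂, y₁, y₂} : Set V) ∧ v ∉ ({x, y, x₁, x₂, y₁, y₂} : Set V) ∧
        G.Adj x₁ u ∧ G.Adj u y₁ ∧ G.Adj x₂ v ∧ G.Adj v y₂) ∨
    (G.dist x₁ y₂ = 2 ∧ G.dist x₂ y₁ = 2 ∧
      ∃ u v : V, u ∉ ({x, y, x₁, x₂, y₁, y₂} : Set V) ∧ v ∉ ({x, y, x₁, x₂, y₁, y₂} : Set V) ∧
        G.Adj x₁ u ∧ G.Adj u y₂ ∧ G.Adj x₂ v ∧ G.Adj v y₁) := by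
  classical
  -- basic non-adjacency / inequality facts between the x_i and y_j
  have hne : ∀ a b : V, G.Adj x a → G.Adj y b → a ≠ y → b ≠ x → a ≠ b := by
    intro a b hxa hyb hay hbx h
    subst h
    exact no_tri hgirth hxy hyb hxa.symm
  have hnadj : ∀ a b : V, G.Adj x a → G.Adj y b → a ≠ y → b ≠ x → ¬ G.Adj a b := by
    intro a b hxa hyb hay hbx h
    exact no_sq hgirth hxa h hyb.symm hxy.symm (fun hh => hbx hh.symm) hay
  have bnd : ∀ a b : V, G.Adj x a → G.Adj y b → a ≠ y → b ≠ x →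
      2 ≤ G.dist a b ∧ G.dist a b ≤ 3 := by
    intro a b hxa hyb hay hbx
    have hr : G.Reachable a b := hxa.symm.reachable.trans (hxy.reachable.trans hyb.reachable)
    have h0 : 0 < G.dist a b := hr.pos_dist_of_ne (hne a b hxa hyb hay hbx)
    have h1 : G.dist a b ≠ 1 := by
      intro h
      exact hnadj a b hxa hyb hay hbx (SimpleGraph.dist_eq_one_iff_adj.mp h)
    have h3 : G.dist a b ≤ 3 := by
      have := SimpleGraph.dist_le
        (SimpleGraph.Walk.cons hxa.symm (SimpleGraph.Walk.cons hxy
          (SimpleGraph.Walk.cons hyb SimpleGraph.Walk.nil)) : G.Walk a b)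
      simpa using this
    exact ⟨by omega, h3⟩
  have b11 := bnd x₁ y₁ hx₁ hy₁ hx1y hy1x
  have b12 := bnd x₁ y₂ hx₁ hy₂ hx1y hy2x
  have b21 := bnd x₂ y₁ hx₂ hy₁ hx2y hy1x
  have b22 := bnd x₂ y₂ hx₂ hy₂ hx2y hy2x
  -- use flatness to get a cheap transport plan
  have hmatch : (G.dist x₁ y₁ = 2 ∧ G.dist x₂ y₂ = 2) ∨
      (G.dist x₁ y₂ = 2 ∧ G.dist x₂ y₁ = 2) := by
    by_contra hm
    push_neg at hm
    have hlt : W1 G (muMeasure G (1/4) x) (muMeasure G (1/4) y) < 5/4 := by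
      rw [hflat]
      rw [ENNReal.lt_div_iff_mul_lt (Or.inl (by norm_num)) (Or.inl (by norm_num))]
      norm_num
    rw [W1, iInf_lt_iff] at hlt
    obtain ⟨⟨π, hπ⟩, hcost⟩ := hlt
    have hflip : IsTransportPlan (muMeasure G (1/4) y) (muMeasure G (1/4) x)
        (fun u v => π v u) := ⟨fun u v => hπ.1 v u, hπ.2.2, hπ.2.1⟩
    have k1 : ¬ (G.dist x₁ y₁ = 3 ∧ G.dist x₁ y₂ = 3) := by
      rintro ⟨p1, p2⟩
      exact absurd hcost (not_lt.mpr (core hreg hxy hx₁ hx₂ hx12 hx1y hx2y hy₁ hy₂ hy12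
        hy1x hy2x p1 p2 b21.1 b22.1 π hπ))
    have k2 : ¬ (G.dist x₂ y₁ = 3 ∧ G.dist x₂ y₂ = 3) := by
      rintro ⟨p1, p2⟩
      exact absurd hcost (not_lt.mpr (core hreg hxy hx₂ hx₁ hx12.symm hx2y hx1y hy₁ hy₂ hy12
        hy1x hy2x p1 p2 b11.1 b12.1 π hπ))
    have k3 : ¬ (G.dist x₁ y₁ = 3 ∧ G.dist x₂ y₁ = 3) := by
      rintro ⟨p1, p2⟩
      have := core hreg hxy.symm hy₁ hy₂ hy12 hy1x hy2x hx₁ hx₂ hx12 hx1y hx2y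
        (by rw [SimpleGraph.dist_comm]; exact p1) (by rw [SimpleGraph.dist_comm]; exact p2)
        (by rw [SimpleGraph.dist_comm]; exact b12.1) (by rw [SimpleGraph.dist_comm]; exact b22.1)
        (fun u v => π v u) hflip
      rw [flip_cost] at this
      exact absurd hcost (not_lt.mpr this)
    have k4 : ¬ (G.dist x₁ y₂ = 3 ∧ G.dist x₂ y₂ = 3) := by
      rintro ⟨p1, p2⟩
      have := core hreg hxy.symm hy₂ hy₁ hy12.symm hy2x hy1x hx₁ hx₂ hx12 hx1y hx2y
        (by rw [SimpleGraph.dist_comm]; exact p1) (by rw [SimpleGraph.dist_comm]; exact p2)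
        (by rw [SimpleGraph.dist_comm]; exact b11.1) (by rw [SimpleGraph.dist_comm]; exact b21.1)
        (fun u v => π v u) hflip
      rw [flip_cost] at this
      exact absurd hcost (not_lt.mpr this)
    omega
  rcases hmatch with ⟨ha, he⟩ | ⟨hb, hc⟩
  · obtain ⟨u, hu1, hu2⟩ := mid ha
    obtain ⟨v, hv1, hv2⟩ := mid he
    obtain ⟨n1, n2, n3, n4, n5, n6⟩ := mids_ne hgirth hxy hx₁ hx₂ hy₁ hy₂ hu1 hu2
    obtain ⟨m1, m2, m3, m4, m5, m6⟩ := mids_ne hgirth hxy hx₂ hx₁ hy₂ hy₁ hv1 hv2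
    refine Or.inl ⟨ha, he, u, v, ?_, ?_, hu1, hu2, hv1, hv2⟩
    · simp only [Set.mem_insert_iff, Set.mem_singleton_iff]
      push_neg
      exact ⟨n1, n2, n3, n4, n5, n6⟩
    · simp only [Set.mem_insert_iff, Set.mem_singleton_iff]
      push_neg
      exact ⟨m1, m2, m4, m3, m6, m5⟩
  · obtain ⟨u, hu1, hu2⟩ := mid hb
    obtain ⟨v, hv1, hv2⟩ := mid hc
    obtain ⟨n1, n2, n3, n4, n5, n6⟩ := mids_ne hgirth hxy hx₁ hx₂ hy₂ hy₁ hu1 hu2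
    obtain ⟨m1, m2, m3, m4, m5, m6⟩ := mids_ne hgirth hxy hx₂ hx₁ hy₁ hy₂ hv1 hv2
    refine Or.inr ⟨hb, hc, u, v, ?_, ?_, hu1, hu2, hv1, hv2⟩
    · simp only [Set.mem_insert_iff, Set.mem_singleton_iff]
      push_neg
      exact ⟨n1, n2, n3, n4, n6, n5⟩
    · simp only [Set.mem_insert_iff, Set.mem_singleton_iff]
      push_neg
      exact ⟨m1, m2, m4, m3, m5, m6⟩


end RicciFlatCubic
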